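/- Fix n ≥ 1, K ≥ 1, p ≥ 1, R_x > 0 and a class index k ∈ {1,…,K}. Let X = ((x_1,y_1),…,(x_n,y_n)) with x_j ∈ ℝ^p, ‖x_j‖ ≤ R_x, and labels y_j ∈ {1,…,K}, and let X' be a neighbor of X obtained by replacing the single entry (x_i, y_i) with (x'_i, y'_i), where ‖x'_i‖ ≤ R_x and y'_i ∈ {1,…,K}. Let I_k(X) = {j : y_j = k} and, when I_k(X) ≠ ∅, let m̂_k(X) = (1/|I_k(X)|)·Σ_{j ∈ I_k(X)} x_j be the class-k sample mean. If I_k(X) ≠ ∅ and I_k(X') ≠ ∅, then ‖m̂_k(X) − m̂_k(X')‖ ≤ 2R_x / min(|I_k(X)|, |I_k(X')|). -/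

import Mathlib

open MeasureTheory ProbabilityTheory Matrix
open scoped Classical NNReal ENNReal RealInnerProductSpace

noncomputable section

namespace EPTR

variable {Z : Type*}

/-- Hamming distance between two datasets of size `n`. -/
def hDist {n : ℕ} (X X' : Fin n → Z) : ℕ :=
  (Finset.univ.filter fun i => X i ≠ X' i).card

/-- Two datasets are neighbors if they differ in exactly one coordinate. -/
def Neighbor {n : ℕ} (X X' : Fin n → Z) : Prop := hDist X X' = 1

/-- Gaussian measure on Euclidean space with mean `m` and covariance `v • I`
(the product of one-dimensional Gaussians of variance `v`). -/
def gaussianE {ι : Type*} [Fintype ι] (m : EuclideanSpace ℝ ι) (v : ℝ≥0) :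
    Measure (EuclideanSpace ℝ ι) :=
  (Measure.pi fun i => gaussianReal (m i) v).map (MeasurableEquiv.toLp 2 (ι → ℝ))

/-- The threshold shift `M = 1 + (2/ε) log (max (1/δ) (1/ε))` of the ePTR mechanism. -/
def Mshift (ε δ : ℝ) : ℝ := 1 + 2 / ε * Real.log (max (1 / δ) (1 / ε))

/-- The release probability of the ePTR mechanism at sub-distance value `g`. -/
def relProb (ε δ g : ℝ) : ℝ :=
  Real.exp (ε * (g - Mshift ε δ) / 2) / (Real.exp (ε * (g - Mshift ε δ) / 2) + 1)

/-- The standard deviation `s = (2α/ε)√(2 log(1.25/δ))` of the ePTR Gaussian noise. -/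
def noiseSD (ε δ α : ℝ) : ℝ := 2 * α / ε * Real.sqrt (2 * Real.log (1.25 / δ))

/-- Output distribution of the ePTR mechanism on input dataset `X`
(Euclidean-space valued version). -/
def ePTR {n : ℕ} {ι : Type*} [Fintype ι] (ε δ α : ℝ)
    (θhat : (Fin n → Z) → EuclideanSpace ℝ ι) (γ : (Fin n → Z) → ℝ)
    (πbot : Measure (EuclideanSpace ℝ ι)) (X : Fin n → Z) :
    Measure (EuclideanSpace ℝ ι) :=
  ENNReal.ofReal (relProb ε δ (γ X)) • gaussianE (θhat X) (Real.toNNReal (noiseSD ε δ α ^ 2))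
    + ENNReal.ofReal (1 - relProb ε δ (γ X)) • πbot

/-- Output distribution of the ePTR mechanism on input dataset `X` (real valued version). -/
def ePTR1 {n : ℕ} (ε δ α : ℝ)
    (θhat : (Fin n → Z) → ℝ) (γ : (Fin n → Z) → ℝ)
    (πbot : Measure ℝ) (X : Fin n → Z) : Measure ℝ :=
  ENNReal.ofReal (relProb ε δ (γ X)) • gaussianReal (θhat X) (Real.toNNReal (noiseSD ε δ α ^ 2))
    + ENNReal.ofReal (1 - relProb ε δ (γ X)) • πbot

/-- `(ε, δ)`-differential privacy of a mechanism: for all neighboring datasets `X, X'`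
and all measurable events `B`, `μ_X(B) ≤ e^ε μ_{X'}(B) + δ`. -/
def IsDP {n : ℕ} {Ω : Type*} [MeasurableSpace Ω]
    (mech : (Fin n → Z) → Measure Ω) (ε δ : ℝ) : Prop :=
  ∀ X X' : Fin n → Z, Neighbor X X' → ∀ B : Set Ω, MeasurableSet B →
    mech X B ≤ ENNReal.ofReal (Real.exp ε) * mech X' B + ENNReal.ofReal δ

/-- Projection onto the closed ball of radius `a` in a normed space:
`proj a v = (a / max ‖v‖ a) • v`. -/
def proj {V : Type*} [NormedAddCommGroup V] [Module ℝ V] (a : ℝ) (v : V) : V :=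
  (a / max ‖v‖ a) • v

/-- Identification of `Fin p → ℝ` with Euclidean space. -/
def toE {p : ℕ} : (Fin p → ℝ) → EuclideanSpace ℝ (Fin p) :=
  ⇑(EuclideanSpace.equiv (Fin p) ℝ).symm

/-- ℓ²-operator norm of a square matrix. -/
def opNorm {p : ℕ} (A : Matrix (Fin p) (Fin p) ℝ) : ℝ :=
  ‖Matrix.toEuclideanCLM (𝕜 := ℝ) A‖

/-- Smallest eigenvalue of a (symmetric) matrix, via the Rayleigh quotient. -/
def lambdaMin {p : ℕ} (A : Matrix (Fin p) (Fin p) ℝ) : ℝ :=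
  ⨅ v : Metric.sphere (0 : EuclideanSpace ℝ (Fin p)) 1,
    ⟪Matrix.toEuclideanCLM (𝕜 := ℝ) A v.1, v.1⟫

/-- Index set of data points carrying label `k`. -/
def Ik {n K : ℕ} {E : Type*} (X : Fin n → E × Fin K) (k : Fin K) : Finset (Fin n) :=
  Finset.univ.filter fun j => (X j).2 = k

/-- Class-`k` sample frequency `μ̂_k = |I_k| / n`. -/
def classFreq {n K : ℕ} {E : Type*} (X : Fin n → E × Fin K) (k : Fin K) : ℝ :=
  (Ik X k).card / n

/-- Class-`k` sample mean (equal to `0` if the class is empty). -/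
def classMean {n K p : ℕ} (X : Fin n → EuclideanSpace ℝ (Fin p) × Fin K) (k : Fin K) :
    EuclideanSpace ℝ (Fin p) :=
  ((Ik X k).card : ℝ)⁻¹ • ∑ j ∈ Ik X k, (X j).1

/-- The sub-distance of the ePTR Bayes classifier:
`γ(X) = max(min_k |I_k(X)| - c₀ n - 1, 0)`. -/
def gammaBC {n K : ℕ} {E : Type*} (c0 : ℝ) (X : Fin n → E × Fin K) : ℝ :=
  max (((⨅ k : Fin K, (Ik X k).card : ℕ) : ℝ) - c0 * n - 1) 0

end EPTR

lemma mean_insert_sub_mean {E : Type*} [NormedAddCommGroup E] [NormedSpace ℝ E]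
    {ι : Type*} [DecidableEq ι] (s : Finset ι) (hs : s.Nonempty) {i : ι} (hi : i ∉ s)
    (f : ι → E) {Rx : ℝ} (hb : ∀ j ∈ insert i s, ‖f j‖ ≤ Rx) :
    ‖(((insert i s).card : ℝ))⁻¹ • ∑ j ∈ insert i s, f j
      - ((s.card : ℝ))⁻¹ • ∑ j ∈ s, f j‖ ≤ 2 * Rx / s.card := by
  have hm : 1 ≤ s.card := Finset.card_pos.mpr hs
  set a : ℝ := (s.card : ℝ) with ha
  have ha1 : (1 : ℝ) ≤ a := by rw [ha]; exact_mod_cast hm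
  have ha0 : (0 : ℝ) < a := lt_of_lt_of_le one_pos ha1
  have hcard : ((insert i s).card : ℝ) = a + 1 := by
    rw [Finset.card_insert_of_notMem hi]; push_cast; ring
  rw [Finset.sum_insert hi, hcard]
  have hkey : (a + 1)⁻¹ • (f i + ∑ j ∈ s, f j) - a⁻¹ • ∑ j ∈ s, f j
      = (a + 1)⁻¹ • f i - (a⁻¹ - (a + 1)⁻¹) • ∑ j ∈ s, f j := by
    module
  rw [hkey]
  have hRx : 0 ≤ Rx := le_trans (norm_nonneg _) (hb i (Finset.mem_insert_self i s))
  have hS : ‖∑ j ∈ s, f j‖ ≤ a * Rx := by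
    calc ‖∑ j ∈ s, f j‖ ≤ ∑ j ∈ s, ‖f j‖ := norm_sum_le _ _
      _ ≤ ∑ _j ∈ s, Rx := Finset.sum_le_sum fun j hj => hb j (Finset.mem_insert_of_mem hj)
      _ = a * Rx := by rw [Finset.sum_const, nsmul_eq_mul]
  have hinv : (0 : ℝ) ≤ a⁻¹ - (a + 1)⁻¹ := by
    have : (a + 1)⁻¹ ≤ a⁻¹ := by
      apply inv_anti₀ ha0; linarith
    linarith
  calc ‖(a + 1)⁻¹ • f i - (a⁻¹ - (a + 1)⁻¹) • ∑ j ∈ s, f j‖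
      ≤ ‖(a + 1)⁻¹ • f i‖ + ‖(a⁻¹ - (a + 1)⁻¹) • ∑ j ∈ s, f j‖ := norm_sub_le _ _
    _ = (a + 1)⁻¹ * ‖f i‖ + (a⁻¹ - (a + 1)⁻¹) * ‖∑ j ∈ s, f j‖ := by
        rw [norm_smul, norm_smul, Real.norm_eq_abs, Real.norm_eq_abs,
          abs_of_nonneg (by positivity), abs_of_nonneg hinv]
    _ ≤ (a + 1)⁻¹ * Rx + (a⁻¹ - (a + 1)⁻¹) * (a * Rx) := by
        gcongr
        exact hb i (Finset.mem_insert_self i s)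
    _ = 2 * Rx * (a + 1)⁻¹ := by
        have h1 : (0 : ℝ) < a + 1 := by linarith
        field_simp
        ring
    _ ≤ 2 * Rx / a := by
        rw [div_eq_mul_inv]
        exact mul_le_mul_of_nonneg_left (inv_anti₀ ha0 (by linarith)) (by linarith)

/-- Sensitivity of the class-`k` sample mean of the Bayes classifier: replacing a single
labeled data point (with features of norm at most `R_x`) changes `m̂_k` by at most
`2 R_x / min(|I_k(X)|, |I_k(X')|)`, provided both class-`k` index sets are nonempty. -/
theorem bayes_mean_sensitivity {n K p : ℕ} (hn : 1 ≤ n) (hK : 1 ≤ K) (hp : 1 ≤ p)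
    {Rx : ℝ} (hRx : 0 < Rx) (k : Fin K) (i : Fin n)
    (X X' : Fin n → EuclideanSpace ℝ (Fin p) × Fin K)
    (hX : ∀ j, ‖(X j).1‖ ≤ Rx) (hX'i : ‖(X' i).1‖ ≤ Rx)
    (hsame : ∀ j, j ≠ i → X' j = X j)
    (hIk : (EPTR.Ik X k).Nonempty) (hIk' : (EPTR.Ik X' k).Nonempty) :
    ‖EPTR.classMean X k - EPTR.classMean X' k‖
      ≤ 2 * Rx / ((min (EPTR.Ik X k).card (EPTR.Ik X' k).card : ℕ) : ℝ) := by
  classical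
  have hmem : ∀ j, j ∈ EPTR.Ik X k ↔ (X j).2 = k := by
    intro j; simp [EPTR.Ik]
  have hmem' : ∀ j, j ∈ EPTR.Ik X' k ↔ (X' j).2 = k := by
    intro j; simp [EPTR.Ik]
  by_cases hiX : (X i).2 = k <;> by_cases hiX' : (X' i).2 = k
  · -- i in both classes
    have hII : EPTR.Ik X' k = EPTR.Ik X k := by
      ext j
      rw [hmem, hmem']
      by_cases hj : j = i
      · subst hj; simp [hiX, hiX']
      · rw [hsame j hj]
    have hiI : i ∈ EPTR.Ik X k := (hmem i).mpr hiX
    have hd : EPTR.classMean X k - EPTR.classMean X' k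
        = ((EPTR.Ik X k).card : ℝ)⁻¹ • ((X i).1 - (X' i).1) := by
      rw [EPTR.classMean, EPTR.classMean, hII, ← smul_sub, ← Finset.sum_sub_distrib]
      congr 1
      rw [Finset.sum_eq_single_of_mem i hiI]
      intro j _ hji
      rw [hsame j hji, sub_self]
    rw [hd, hII, min_self, norm_smul, Real.norm_eq_abs, abs_of_nonneg (by positivity)]
    calc ((EPTR.Ik X k).card : ℝ)⁻¹ * ‖(X i).1 - (X' i).1‖
        ≤ ((EPTR.Ik X k).card : ℝ)⁻¹ * (2 * Rx) := by
          gcongr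
          calc ‖(X i).1 - (X' i).1‖ ≤ ‖(X i).1‖ + ‖(X' i).1‖ := norm_sub_le _ _
            _ ≤ Rx + Rx := add_le_add (hX i) hX'i
            _ = 2 * Rx := by ring
      _ = 2 * Rx / ((EPTR.Ik X k).card : ℝ) := by rw [div_eq_mul_inv, mul_comm]
  · -- i in Ik X k but not in Ik X' k
    have hiI' : i ∉ EPTR.Ik X' k := fun h => hiX' ((hmem' i).mp h)
    have hins : EPTR.Ik X k = insert i (EPTR.Ik X' k) := by
      ext j
      rw [Finset.mem_insert, hmem, hmem']
      by_cases hj : j = i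
      · subst hj; simp [hiX]
      · rw [hsame j hj]; simp [hj]
    have hsum' : ∑ j ∈ EPTR.Ik X' k, (X' j).1 = ∑ j ∈ EPTR.Ik X' k, (X j).1 :=
      Finset.sum_congr rfl fun j hj => by
        rw [hsame j (by rintro rfl; exact hiI' hj)]
    have hmin : min (EPTR.Ik X k).card (EPTR.Ik X' k).card = (EPTR.Ik X' k).card := by
      rw [hins, Finset.card_insert_of_notMem hiI']; omega
    rw [hmin, EPTR.classMean, EPTR.classMean, hsum', hins]
    exact mean_insert_sub_mean _ hIk' hiI' _ fun j _ => hX j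
  · -- i in Ik X' k but not in Ik X k
    have hiI : i ∉ EPTR.Ik X k := fun h => hiX ((hmem i).mp h)
    have hins : EPTR.Ik X' k = insert i (EPTR.Ik X k) := by
      ext j
      rw [Finset.mem_insert, hmem, hmem']
      by_cases hj : j = i
      · subst hj; simp [hiX']
      · rw [hsame j hj]; simp [hj]
    have hsum' : ∑ j ∈ EPTR.Ik X k, (X j).1 = ∑ j ∈ EPTR.Ik X k, (X' j).1 :=
      Finset.sum_congr rfl fun j hj => by
        rw [hsame j (by rintro rfl; exact hiI hj)]
    have hmin : min (EPTR.Ik X k).card (EPTR.Ik X' k).card = (EPTR.Ik X k).card := by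
      rw [hins, Finset.card_insert_of_notMem hiI]; omega
    rw [hmin, norm_sub_rev, EPTR.classMean, EPTR.classMean, hsum', hins]
    refine mean_insert_sub_mean _ hIk hiI _ fun j hj => ?_
    rcases Finset.mem_insert.mp hj with rfl | hj2
    · exact hX'i
    · rw [hsame j (by rintro rfl; exact hiI hj2)]; exact hX j
  · -- i in neither class
    have hII : EPTR.Ik X' k = EPTR.Ik X k := by
      ext j
      rw [hmem, hmem']
      by_cases hj : j = i
      · subst hj; simp [hiX, hiX']
      · rw [hsame j hj]
    have hiI : i ∉ EPTR.Ik X k := fun h => hiX ((hmem i).mp h)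
    have hsum' : ∑ j ∈ EPTR.Ik X k, (X' j).1 = ∑ j ∈ EPTR.Ik X k, (X j).1 :=
      Finset.sum_congr rfl fun j hj => by
        rw [hsame j (by rintro rfl; exact hiI hj)]
    have : EPTR.classMean X' k = EPTR.classMean X k := by
      rw [EPTR.classMean, EPTR.classMean, hII, hsum']
    rw [this, sub_self, norm_zero]
    have hc : 0 < (min (EPTR.Ik X k).card (EPTR.Ik X' k).card : ℕ) := by
      have := Finset.card_pos.mpr hIk
      have := Finset.card_pos.mpr hIk'
      omega
    positivity
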